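/- Let G=(V,W,E) be a label cover instance with m edges such that no label assignment satisfies more than s edges. Then in the StackSP instance produced by the reduction, every pricing yields revenue at most m + 4s. -/

import Mathlib

open scoped ENNReal

/-! ## Label cover instances -/

/-- A label cover instance: a bipartite graph `(V, W, E)` with edge list
`(ve i, we i)` for `i : Fin m`, a label set `Fin k`, and for every edge `i` a
nonempty set `R i` of satisfying label pairs. -/
structure LabelCover where
  V : Type
  W : Type
  m : ℕ
  k : ℕ
  ve : Fin m → V
  we : Fin m → W
  R : Fin m → Finset (Fin k × Fin k)
  R_nonempty : ∀ i, (R i).Nonempty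

namespace LabelCover

/-- The label assignment `(ℓv, ℓw)` satisfies edge `i`. -/
def Sat (I : LabelCover) (ℓv : I.V → Fin I.k) (ℓw : I.W → Fin I.k) (i : Fin I.m) : Prop :=
  (ℓv (I.ve i), ℓw (I.we i)) ∈ I.R i

instance (I : LabelCover) (ℓv : I.V → Fin I.k) (ℓw : I.W → Fin I.k) :
    DecidablePred (I.Sat ℓv ℓw) := fun i =>
  decidable_of_iff ((ℓv (I.ve i), ℓw (I.we i)) ∈ I.R i) Iff.rfl

/-- The number of edges satisfied by the assignment `(ℓv, ℓw)`. -/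
def satCount (I : LabelCover) (ℓv : I.V → Fin I.k) (ℓw : I.W → Fin I.k) : ℕ :=
  (Finset.univ.filter (I.Sat ℓv ℓw)).card

/-- The label pairs `a` on edge `i` and `b` on edge `j` are conflicting. -/
def Conflict (I : LabelCover) (i j : Fin I.m) (a b : Fin I.k × Fin I.k) : Prop :=
  (I.ve i = I.ve j ∧ a.1 ≠ b.1) ∨ (I.we i = I.we j ∧ a.2 ≠ b.2)

/-! ## The StackSP instance produced by the reduction -/

/-- The nodes of the StackSP instance: the gadget boundary nodes `bd i`
(`bd i.castSucc` is the left endpoint of gadget `i`, `bd i.succ` its right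
endpoint; `bd 0 = s`, `bd (last m) = t`), and for every gadget `i` and label
pair `a` the tail `tl i a` and head `hd i a` of the pricable edge `e_{i,a}`. -/
inductive Node (m k : ℕ) where
  | bd (i : Fin (m + 1))
  | tl (i : Fin m) (a : Fin k × Fin k)
  | hd (i : Fin m) (a : Fin k × Fin k)
  deriving DecidableEq

/-- The edges of the StackSP instance: for every gadget `i` and label pair `a`,
the (fixed-cost 0) edge `enter i a` from the left endpoint of gadget `i` to the
tail of the pricable edge `price i a`, the pricable edge itself, and the
(fixed-cost 0) edge `exit i a` from its head to the right endpoint of gadget `i`;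
the parallel fixed-cost-2 edge `skip i` of gadget `i`; and the shortcut edge
`shortcut i j a b` of fixed cost `j - i - 1` from the head of `price i a` to
the tail of `price j b`. -/
inductive Edge (m k : ℕ) where
  | enter (i : Fin m) (a : Fin k × Fin k)
  | price (i : Fin m) (a : Fin k × Fin k)
  | exit (i : Fin m) (a : Fin k × Fin k)
  | skip (i : Fin m)
  | shortcut (i j : Fin m) (a b : Fin k × Fin k)
  deriving DecidableEq

namespace Edge

/-- Source node of an edge (all edges are directed from left to right). -/
def src {m k : ℕ} : Edge m k → Node m k
  | enter i _ => .bd i.castSucc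
  | price i a => .tl i a
  | exit i a => .hd i a
  | skip i => .bd i.castSucc
  | shortcut i _ a _ => .hd i a

/-- Destination node of an edge. -/
def dst {m k : ℕ} : Edge m k → Node m k
  | enter i a => .tl i a
  | price i a => .hd i a
  | exit i _ => .bd i.succ
  | skip i => .bd i.succ
  | shortcut _ j _ b => .tl j b

/-- The pricable edges. -/
def IsPricable {m k : ℕ} : Edge m k → Prop
  | price _ _ => True
  | _ => False

/-- The fixed cost of an edge: `2` for the parallel fixed edge of a gadget,
`j - i - 1` for a shortcut from gadget `i` to gadget `j`, `0` otherwise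
(pricable edges have fixed cost `0`). -/
noncomputable def fixedCost {m k : ℕ} : Edge m k → ℝ≥0∞
  | skip _ => 2
  | shortcut i j _ _ => (((j : ℕ) - (i : ℕ) - 1 : ℕ) : ℝ≥0∞)
  | _ => 0

/-- Whether an edge is a pricable edge of gadget `g` (as a `Bool`). -/
def isPricableOf {m k : ℕ} (g : Fin m) : Edge m k → Bool
  | price i _ => i == g
  | _ => false

end Edge

/-- The edges actually present in the StackSP instance built from `I`:
gadget `i` has edges only for the label pairs in `R i`, and a shortcut from
gadget `i` to gadget `j` exists precisely when `i < j` and the corresponding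
label pairs are conflicting. -/
def EdgeOK (I : LabelCover) : Edge I.m I.k → Prop
  | .enter i a => a ∈ I.R i
  | .price i a => a ∈ I.R i
  | .exit i a => a ∈ I.R i
  | .skip _ => True
  | .shortcut i j a b =>
      (i : ℕ) < (j : ℕ) ∧ a ∈ I.R i ∧ b ∈ I.R j ∧ I.Conflict i j a b

/-- A pricing assigns a nonnegative (possibly infinite) price to every
pricable edge `e_{i,a}`. -/
abbrev Pricing (I : LabelCover) := Fin I.m → Fin I.k × Fin I.k → ℝ≥0∞

/-- The price contributed by an edge (the price of a pricable edge, `0` for a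
fixed-cost edge). -/
noncomputable def priceOf (I : LabelCover) (p : Pricing I) : Edge I.m I.k → ℝ≥0∞
  | .price i a => p i a
  | _ => 0

/-- The total cost of an edge: fixed cost plus price. -/
noncomputable def edgeCost (I : LabelCover) (p : Pricing I) (e : Edge I.m I.k) : ℝ≥0∞ :=
  e.fixedCost + I.priceOf p e

/-- Directed walks in the StackSP instance of `I`, recorded as lists of
consecutive valid edges. -/
inductive Walk (I : LabelCover) : Node I.m I.k → Node I.m I.k → List (Edge I.m I.k) → Prop
  | nil (u : Node I.m I.k) : Walk I u u []
  | cons {e : Edge I.m I.k} {v : Node I.m I.k} {es : List (Edge I.m I.k)} :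
      I.EdgeOK e → Walk I e.dst v es → Walk I e.src v (e :: es)

/-- The source `s` of the instance: the left endpoint of gadget `1`. -/
def source (I : LabelCover) : Node I.m I.k := .bd 0

/-- The sink `t` of the instance: the right endpoint of gadget `m`. -/
def target (I : LabelCover) : Node I.m I.k := .bd (Fin.last I.m)

/-- Total cost (fixed costs plus prices) of a list of edges. -/
noncomputable def cost (I : LabelCover) (p : Pricing I) (es : List (Edge I.m I.k)) : ℝ≥0∞ :=
  (es.map (I.edgeCost p)).sum

/-- Revenue of a list of edges: the sum of the prices of its pricable edges. -/
noncomputable def revenue (I : LabelCover) (p : Pricing I) (es : List (Edge I.m I.k)) : ℝ≥0∞ :=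
  (es.map (I.priceOf p)).sum

/-- Total fixed cost of a list of edges. -/
noncomputable def fixedSum (I : LabelCover) (es : List (Edge I.m I.k)) : ℝ≥0∞ :=
  (es.map Edge.fixedCost).sum

/-- `P` is a minimum-cost directed `s`-`t` path under pricing `p`. -/
def IsOptPath (I : LabelCover) (p : Pricing I) (P : List (Edge I.m I.k)) : Prop :=
  Walk I I.source I.target P ∧
    ∀ Q, Walk I I.source I.target Q → I.cost p P ≤ I.cost p Q

/-- `P` is the path purchased by the consumer: a minimum-cost `s`-`t` path
which, among minimum-cost paths, maximizes the revenue. -/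
def IsPurchased (I : LabelCover) (p : Pricing I) (P : List (Edge I.m I.k)) : Prop :=
  I.IsOptPath p P ∧ ∀ Q, I.IsOptPath p Q → I.revenue p Q ≤ I.revenue p P

/-! ## P-edges, significant gadgets and islands -/

/-- Gadget `g` has a P-edge, i.e. `P` uses a pricable edge of gadget `g`. -/
def HasPEdge (I : LabelCover) (P : List (Edge I.m I.k)) (g : Fin I.m) : Prop :=
  ∃ a, Edge.price g a ∈ P

/-- Gadget `g'` has a P-edge that is joined to the P-edge `e_{g,a}` of gadget
`g` by a shortcut edge (in particular `g < g'`). -/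
def Linked (I : LabelCover) (P : List (Edge I.m I.k)) (g : Fin I.m)
    (a : Fin I.k × Fin I.k) (g' : Fin I.m) : Prop :=
  ∃ b, Edge.price g' b ∈ P ∧ I.EdgeOK (.shortcut g g' a b)

/-- Every pricable edge not on `P` has price `+∞` (the w.l.o.g. normalization). -/
def OffPathInfty (I : LabelCover) (p : Pricing I) (P : List (Edge I.m I.k)) : Prop :=
  ∀ g a, Edge.price g a ∉ P → p g a = ⊤

/-- The length `in_g` of the shortcut edge used by `P` to enter gadget `g`
(`0` if no shortcut is used). -/
noncomputable def inLen (I : LabelCover) (P : List (Edge I.m I.k)) (g : Fin I.m) : ℕ :=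
  if h : ∃ g' : Fin I.m, ∃ a b, Edge.shortcut g' g a b ∈ P then
    (g : ℕ) - (h.choose : ℕ) - 1
  else 0

/-- The length `out_g` of the shortcut edge used by `P` to exit gadget `g`
(`0` if no shortcut is used). -/
noncomputable def outLen (I : LabelCover) (P : List (Edge I.m I.k)) (g : Fin I.m) : ℕ :=
  if h : ∃ g' : Fin I.m, ∃ a b, Edge.shortcut g g' a b ∈ P then
    (h.choose : ℕ) - (g : ℕ) - 1
  else 0

/-- `P` splits as `P1 ++ M ++ P2` where `P1` goes from `s` to `u`, `M` from `u`
to `v` and `P2` from `v` to `t`. -/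
def SplitsAt (I : LabelCover) (P P1 M P2 : List (Edge I.m I.k))
    (u v : Node I.m I.k) : Prop :=
  P = P1 ++ M ++ P2 ∧ Walk I I.source u P1 ∧ Walk I u v M ∧ Walk I v I.target P2

/-- The sequence `σ 0 < σ 1 < … < σ (r-1)` of significant gadgets of the
purchased path `P`, together with the labels of their P-edges:
`σ 0` is the first gadget with a P-edge; given `σ i`, if some gadget beyond
`σ i` has a P-edge joined to the P-edge of `σ i` by a shortcut edge then
`σ (i+1)` is the largest such gadget, and otherwise `σ i` is an end point and
`σ (i+1)` is the next gadget after `σ i` having a P-edge; the process stops at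
`σ (r-1)`, which is an end point, with no P-edge beyond it. -/
structure SigSeq (I : LabelCover) (P : List (Edge I.m I.k)) where
  r : ℕ
  rpos : 0 < r
  σ : Fin r → Fin I.m
  lab : Fin r → Fin I.k × Fin I.k
  mono : StrictMono σ
  mem : ∀ i, Edge.price (σ i) (lab i) ∈ P
  first : ∀ g, I.HasPEdge P g → σ ⟨0, rpos⟩ ≤ g
  step : ∀ i : ℕ, ∀ h : i + 1 < r,
    (I.Linked P (σ ⟨i, Nat.lt_of_succ_lt h⟩) (lab ⟨i, Nat.lt_of_succ_lt h⟩) (σ ⟨i + 1, h⟩) ∧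
      ∀ g, I.Linked P (σ ⟨i, Nat.lt_of_succ_lt h⟩) (lab ⟨i, Nat.lt_of_succ_lt h⟩) g →
        g ≤ σ ⟨i + 1, h⟩) ∨
    ((¬ ∃ g, I.Linked P (σ ⟨i, Nat.lt_of_succ_lt h⟩) (lab ⟨i, Nat.lt_of_succ_lt h⟩) g) ∧
      I.HasPEdge P (σ ⟨i + 1, h⟩) ∧
      ∀ g, σ ⟨i, Nat.lt_of_succ_lt h⟩ < g → I.HasPEdge P g → σ ⟨i + 1, h⟩ ≤ g)
  last : ¬ ∃ g, I.Linked P (σ ⟨r - 1, by omega⟩) (lab ⟨r - 1, by omega⟩) g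
  cover : ∀ g, I.HasPEdge P g → g ≤ σ ⟨r - 1, by omega⟩

/-- Significant gadget `σ i` is an end point: no gadget has a P-edge joined to
the P-edge of `σ i` by a shortcut edge. -/
def SigSeq.IsEnd {I : LabelCover} {P : List (Edge I.m I.k)} (S : I.SigSeq P)
    (i : Fin S.r) : Prop :=
  ¬ ∃ g, I.Linked P (S.σ i) (S.lab i) g

/-- Significant gadget `σ i` is a start point: it is the first significant
gadget, or its predecessor is an end point. -/
def SigSeq.IsStart {I : LabelCover} {P : List (Edge I.m I.k)} (S : I.SigSeq P)
    (i : Fin S.r) : Prop :=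
  (i : ℕ) = 0 ∨ (0 < (i : ℕ) ∧ ∃ h : (i : ℕ) - 1 < S.r, S.IsEnd ⟨(i : ℕ) - 1, h⟩)

/-- `σ α, …, σ ω` is an island: `α` is a start point, `ω` is the next end
point after `α`. -/
def SigSeq.IsIsland {I : LabelCover} {P : List (Edge I.m I.k)} (S : I.SigSeq P)
    (α ω : Fin S.r) : Prop :=
  α ≤ ω ∧ S.IsStart α ∧ S.IsEnd ω ∧ ∀ i : Fin S.r, α ≤ i → i < ω → ¬ S.IsEnd i

end LabelCover

open LabelCover

namespace LabelCover

open Edge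

variable {I : LabelCover}

/-- Coordinate of a node, strictly increasing along edges. -/
def xc {m k : ℕ} : Node m k → ℕ
  | .bd i => 3 * i
  | .tl i _ => 3 * i + 1
  | .hd i _ => 3 * i + 2

/-- Fixed cost of an edge, as a natural number. -/
def fcNat {m k : ℕ} : Edge m k → ℕ
  | .skip _ => 2
  | .shortcut i j _ _ => (j : ℕ) - i - 1
  | _ => 0

lemma fixedCost_eq {m k : ℕ} (e : Edge m k) : e.fixedCost = (fcNat e : ℝ≥0∞) := by
  cases e <;> simp [Edge.fixedCost, fcNat]

lemma xc_lt_of_ok {e : Edge I.m I.k} (h : I.EdgeOK e) : xc e.src < xc e.dst := by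
  cases e <;>
    simp only [EdgeOK, Edge.src, Edge.dst, xc, Fin.coe_castSucc, Fin.val_succ] at h ⊢ <;>
    omega

lemma Walk.append {u v w : Node I.m I.k} {A B : List (Edge I.m I.k)}
    (hA : Walk I u v A) (hB : Walk I v w B) : Walk I u w (A ++ B) := by
  induction hA with
  | nil => simpa using hB
  | cons he _ ih => exact Walk.cons he (ih hB)

lemma walk_split {u w : Node I.m I.k} {A B : List (Edge I.m I.k)}
    (h : Walk I u w (A ++ B)) : ∃ v, Walk I u v A ∧ Walk I v w B := by
  induction A generalizing u with
  | nil => exact ⟨u, Walk.nil u, by simpa using h⟩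
  | cons e es ih =>
    cases h with
    | cons he hw =>
      obtain ⟨v, h1, h2⟩ := ih hw
      exact ⟨v, Walk.cons he h1, h2⟩

lemma edgeOK_of_mem {u v : Node I.m I.k} {es : List (Edge I.m I.k)}
    (h : Walk I u v es) {e : Edge I.m I.k} (he : e ∈ es) : I.EdgeOK e := by
  induction h with
  | nil => simp at he
  | cons hok hw ih =>
    rcases List.mem_cons.1 he with rfl | he'
    · exact hok
    · exact ih he'

lemma walk_xc_le {u v : Node I.m I.k} {es : List (Edge I.m I.k)}
    (h : Walk I u v es) : xc u ≤ xc v := by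
  induction h with
  | nil => exact le_rfl
  | cons hok hw ih => exact le_trans (le_of_lt (xc_lt_of_ok hok)) ih

lemma walk_mem_split {u v : Node I.m I.k} {es : List (Edge I.m I.k)}
    (h : Walk I u v es) {e : Edge I.m I.k} (he : e ∈ es) :
    ∃ A B, es = A ++ e :: B ∧ Walk I u e.src A ∧ Walk I e.dst v B := by
  induction h with
  | nil => simp at he
  | @cons f _ es' hok hw ih =>
    rcases List.mem_cons.1 he with rfl | he'
    · exact ⟨[], es', rfl, Walk.nil _, hw⟩
    · obtain ⟨A, B, hAB, h1, h2⟩ := ih he'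
      exact ⟨f :: A, B, by rw [hAB]; rfl, Walk.cons hok h1, h2⟩

lemma walk_nil_eq {u v : Node I.m I.k} (h : Walk I u v []) : u = v := by
  cases h; rfl

lemma walk_self_nil {u : Node I.m I.k} {es : List (Edge I.m I.k)}
    (h : Walk I u u es) : es = [] := by
  cases h with
  | nil => rfl
  | cons hok hw =>
    exact absurd (walk_xc_le hw) (by have := xc_lt_of_ok hok; omega)

lemma cost_nil : I.cost p [] = 0 := rfl

variable {p : Pricing I}

lemma cost_cons (e : Edge I.m I.k) (es : List (Edge I.m I.k)) :
    I.cost p (e :: es) = I.edgeCost p e + I.cost p es := by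
  simp [cost]

lemma cost_append (A B : List (Edge I.m I.k)) :
    I.cost p (A ++ B) = I.cost p A + I.cost p B := by
  simp [cost]

lemma revenue_nil : I.revenue p [] = 0 := rfl

lemma revenue_cons (e : Edge I.m I.k) (es : List (Edge I.m I.k)) :
    I.revenue p (e :: es) = I.priceOf p e + I.revenue p es := by
  simp [revenue]

lemma revenue_append (A B : List (Edge I.m I.k)) :
    I.revenue p (A ++ B) = I.revenue p A + I.revenue p B := by
  simp [revenue]

lemma priceOf_price (g : Fin I.m) (a : Fin I.k × Fin I.k) :
    I.priceOf p (.price g a) = p g a := rfl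

lemma edgeCost_eq (e : Edge I.m I.k) :
    I.edgeCost p e = (fcNat e : ℝ≥0∞) + I.priceOf p e := by
  rw [edgeCost, fixedCost_eq]

lemma priceOf_eq_zero {e : Edge I.m I.k} (h : ∀ g a, e ≠ .price g a) :
    I.priceOf p e = 0 := by
  cases e <;> first | rfl | exact absurd rfl (h _ _)

/-- cost is at least the fixed cost of any member plus the total revenue. -/
lemma cost_eq_fixed_add_revenue (es : List (Edge I.m I.k)) :
    I.cost p es = I.fixedSum es + I.revenue p es := by
  induction es with
  | nil => simp [cost, fixedSum, revenue]
  | cons e es ih =>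
    simp only [cost, fixedSum, revenue, List.map_cons, List.sum_cons] at *
    rw [ih, edgeCost]
    ring

lemma fc_le_fixedSum {es : List (Edge I.m I.k)} {e : Edge I.m I.k} (h : e ∈ es) :
    (fcNat e : ℝ≥0∞) ≤ I.fixedSum es := by
  rw [← fixedCost_eq]
  exact List.single_le_sum (fun x _ => zero_le) _ (List.mem_map_of_mem h)

/-- A chain of skip edges between boundary nodes. -/
lemma exists_skip_walk (x y : Fin (I.m + 1)) (h : (x : ℕ) ≤ y) :
    ∃ M, Walk I (.bd x) (.bd y) M ∧ I.cost p M = ((2 * ((y : ℕ) - x) : ℕ) : ℝ≥0∞) := by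
  obtain ⟨d, hd⟩ : ∃ d, (y : ℕ) = x + d := ⟨y - x, by omega⟩
  clear h
  induction d generalizing x with
  | zero =>
    have : x = y := Fin.ext (by omega)
    subst this
    exact ⟨[], Walk.nil _, by simp [cost]⟩
  | succ d ih =>
    have hxm : (x : ℕ) < I.m := by have := y.isLt; omega
    have hcs : (Fin.castSucc ⟨(x : ℕ), hxm⟩ : Fin (I.m + 1)) = x := by
      ext; simp
    have h1 : Walk I (.bd x) (.bd (⟨(x : ℕ), hxm⟩ : Fin I.m).succ)
        [Edge.skip ⟨(x : ℕ), hxm⟩] := by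
      have hxx : (Edge.skip (⟨(x : ℕ), hxm⟩ : Fin I.m)).src = (Node.bd x : Node I.m I.k) := by
        show Node.bd (Fin.castSucc ⟨(x : ℕ), hxm⟩) = Node.bd x
        rw [hcs]
      rw [← hxx]
      exact Walk.cons (by trivial) (Walk.nil _)
    have hsv : (((⟨(x : ℕ), hxm⟩ : Fin I.m).succ : Fin (I.m + 1)) : ℕ) = (x : ℕ) + 1 := rfl
    obtain ⟨M, hM, hMc⟩ := ih (⟨(x : ℕ), hxm⟩ : Fin I.m).succ (by omega)
    refine ⟨[Edge.skip ⟨(x : ℕ), hxm⟩] ++ M, h1.append hM, ?_⟩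
    rw [cost_append, hMc]
    have h2c : I.cost p [Edge.skip (⟨(x : ℕ), hxm⟩ : Fin I.m)] = ((2 : ℕ) : ℝ≥0∞) := by
      simp [cost, edgeCost_eq, fcNat, priceOf]
    rw [h2c, ← Nat.cast_add]
    congr 1
    omega

lemma walk_cons_inv {u v : Node I.m I.k} {e : Edge I.m I.k} {es : List (Edge I.m I.k)}
    (h : Walk I u v (e :: es)) : u = e.src ∧ I.EdgeOK e ∧ Walk I e.dst v es := by
  cases h with
  | cons hok hw => exact ⟨rfl, hok, hw⟩

lemma walk_tl_cons {g : Fin I.m} {a : Fin I.k × Fin I.k} {v : Node I.m I.k}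
    {e : Edge I.m I.k} {es : List (Edge I.m I.k)}
    (h : Walk I (.tl g a) v (e :: es)) :
    e = .price g a ∧ Walk I (.hd g a) v es := by
  obtain ⟨hsrc, hok, hw⟩ := walk_cons_inv h
  cases e with
  | price i b =>
    obtain ⟨rfl, rfl⟩ : g = i ∧ a = b := by simpa [Edge.src] using hsrc
    exact ⟨rfl, by simpa [Edge.dst] using hw⟩
  | enter i b => simp [Edge.src] at hsrc
  | exit i b => simp [Edge.src] at hsrc
  | skip i => simp [Edge.src] at hsrc
  | shortcut i j b c => simp [Edge.src] at hsrc

lemma walk_hd_cons {g : Fin I.m} {a : Fin I.k × Fin I.k} {v : Node I.m I.k}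
    {e : Edge I.m I.k} {es : List (Edge I.m I.k)}
    (h : Walk I (.hd g a) v (e :: es)) :
    (e = .exit g a ∧ Walk I (.bd g.succ) v es) ∨
      (∃ h' b, e = .shortcut g h' a b ∧ I.EdgeOK (Edge.shortcut g h' a b) ∧
        Walk I (.tl h' b) v es) := by
  obtain ⟨hsrc, hok, hw⟩ := walk_cons_inv h
  cases e with
  | exit i b =>
    obtain ⟨rfl, rfl⟩ : g = i ∧ a = b := by simpa [Edge.src] using hsrc
    exact Or.inl ⟨rfl, by simpa [Edge.dst] using hw⟩
  | shortcut i j b c =>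
    obtain ⟨rfl, rfl⟩ : g = i ∧ a = b := by simpa [Edge.src] using hsrc
    exact Or.inr ⟨_, _, rfl, hok, by simpa [Edge.dst] using hw⟩
  | enter i b => simp [Edge.src] at hsrc
  | price i b => simp [Edge.src] at hsrc
  | skip i => simp [Edge.src] at hsrc

lemma walk_bd_cons {x : Fin (I.m + 1)} {v : Node I.m I.k}
    {e : Edge I.m I.k} {es : List (Edge I.m I.k)}
    (h : Walk I (.bd x) v (e :: es)) :
    (∃ (g : Fin I.m) (a : Fin I.k × Fin I.k), g.castSucc = x ∧ e = .enter g a ∧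
        a ∈ I.R g ∧ Walk I (.tl g a) v es) ∨
      (∃ g : Fin I.m, g.castSucc = x ∧ e = .skip g ∧ Walk I (.bd g.succ) v es) := by
  obtain ⟨hsrc, hok, hw⟩ := walk_cons_inv h
  cases e with
  | enter i b =>
    have hx : i.castSucc = x := by
      have : Node.bd x = (Node.bd i.castSucc : Node I.m I.k) := by simpa [Edge.src] using hsrc
      injection this with hh
      exact hh.symm
    exact Or.inl ⟨_, _, hx, rfl, hok, by simpa [Edge.dst] using hw⟩
  | skip i =>
    have hx : i.castSucc = x := by
      have : Node.bd x = (Node.bd i.castSucc : Node I.m I.k) := by simpa [Edge.src] using hsrc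
      injection this with hh
      exact hh.symm
    exact Or.inr ⟨_, hx, rfl, by simpa [Edge.dst] using hw⟩
  | price i b => simp [Edge.src] at hsrc
  | exit i b => simp [Edge.src] at hsrc
  | shortcut i j b c => simp [Edge.src] at hsrc

lemma walk_tl_target_ne_nil {g : Fin I.m} {a : Fin I.k × Fin I.k}
    {es : List (Edge I.m I.k)} (h : Walk I (.tl g a) I.target es) : es ≠ [] := by
  intro hne; subst hne
  have := walk_nil_eq h
  simp [target] at this

lemma walk_hd_target_ne_nil {g : Fin I.m} {a : Fin I.k × Fin I.k}
    {es : List (Edge I.m I.k)} (h : Walk I (.hd g a) I.target es) : es ≠ [] := by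
  intro hne; subst hne
  have := walk_nil_eq h
  simp [target] at this

/-- In a walk there is at most one pricable edge per gadget. -/
lemma price_unique {u v : Node I.m I.k} {es : List (Edge I.m I.k)}
    (h : Walk I u v es) {g : Fin I.m} {a b : Fin I.k × Fin I.k}
    (ha : Edge.price g a ∈ es) (hb : Edge.price g b ∈ es) : a = b := by
  by_contra hab
  obtain ⟨A, B, hAB, h1, h2⟩ := walk_mem_split h ha
  subst hAB
  rcases List.mem_append.1 hb with hbA | hbB
  · obtain ⟨A', B', _, _, h4⟩ := walk_mem_split h1 hbA
    have := walk_xc_le h4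
    simp [Edge.dst, Edge.src, xc] at this
  · rcases List.mem_cons.1 hbB with heq | hbB'
    · exact hab (by injection heq with h1 h2; exact h2.symm)
    · obtain ⟨A', B', _, h3, _⟩ := walk_mem_split h2 hbB'
      have := walk_xc_le h3
      simp [Edge.dst, Edge.src, xc] at this

/-- Pricable edges occurring after the head of gadget `σ` lie strictly beyond `σ`. -/
lemma price_gt_of_mem {σ : Fin I.m} {c : Fin I.k × Fin I.k} {v : Node I.m I.k}
    {es : List (Edge I.m I.k)} (h : Walk I (.hd σ c) v es)
    {g : Fin I.m} {b : Fin I.k × Fin I.k} (hg : Edge.price g b ∈ es) :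
    (σ : ℕ) < g := by
  obtain ⟨A, B, _, h1, _⟩ := walk_mem_split h hg
  have := walk_xc_le h1
  simp only [Edge.src, xc] at this
  omega

section Opt

variable {P : List (Edge I.m I.k)}
variable (hOpt : ∀ Q, Walk I I.source I.target Q → I.cost p P ≤ I.cost p Q)

include hOpt

lemma cost_P_le_two_m : I.cost p P ≤ ((2 * I.m : ℕ) : ℝ≥0∞) := by
  obtain ⟨M, hM, hMc⟩ := exists_skip_walk (I := I) (p := p) 0 (Fin.last I.m)
    (by simp)
  have h := hOpt M hM
  rw [hMc] at h
  simpa using h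

lemma cost_P_ne_top : I.cost p P ≠ ⊤ :=
  ne_top_of_le_ne_top (ENNReal.natCast_ne_top _) (cost_P_le_two_m hOpt)

/-- The basic exchange argument: a middle segment of the optimal path costs at
most any alternative route with the same endpoints. -/
lemma exchange {A M B M' : List (Edge I.m I.k)} {u v : Node I.m I.k}
    (hPs : P = A ++ M ++ B)
    (hA : Walk I I.source u A) (hM : Walk I u v M) (hB : Walk I v I.target B)
    (hM' : Walk I u v M') : I.cost p M ≤ I.cost p M' := by
  have hQ := hOpt (A ++ (M' ++ B)) (hA.append (hM'.append hB))
  rw [hPs, List.append_assoc, cost_append, cost_append, cost_append, cost_append] at hQ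
  have hfin : I.cost p A + (I.cost p M + I.cost p B) ≠ ⊤ := by
    rw [← cost_append, ← cost_append, ← List.append_assoc, ← hPs]
    exact cost_P_ne_top hOpt
  have hA' : I.cost p A ≠ ⊤ := fun h => hfin (by simp [h])
  have hB' : I.cost p B ≠ ⊤ := fun h => hfin (by simp [h])
  have h1 := (ENNReal.add_le_add_iff_left hA').mp hQ
  exact (ENNReal.add_le_add_iff_right hB').mp h1

end Opt

lemma conflict_symm {i j : Fin I.m} {a b : Fin I.k × Fin I.k}
    (h : I.Conflict i j a b) : I.Conflict j i b a := by
  rcases h with ⟨h1, h2⟩ | ⟨h1, h2⟩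
  · exact Or.inl ⟨h1.symm, h2.symm⟩
  · exact Or.inr ⟨h1.symm, h2.symm⟩

lemma walk_end_unique {u v v' : Node I.m I.k} {es : List (Edge I.m I.k)}
    (h : Walk I u v es) (h' : Walk I u v' es) : v = v' := by
  induction es generalizing u with
  | nil => rw [← walk_nil_eq h, ← walk_nil_eq h']
  | cons e es ih =>
    obtain ⟨_, _, hw⟩ := walk_cons_inv h
    obtain ⟨_, _, hw'⟩ := walk_cons_inv h'
    exact ih hw hw'

/-- The selected set of pairwise non-conflicting pricable edges of `V`. -/
def GoodT (I : LabelCover) (V : List (Edge I.m I.k))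
    (T : Finset (Fin I.m × (Fin I.k × Fin I.k))) : Prop :=
  (∀ z ∈ T, Edge.price z.1 z.2 ∈ V) ∧
    (∀ z ∈ T, ∀ w ∈ T, z ≠ w → ¬ I.Conflict z.1 w.1 z.2 w.2)

/-- Induction statement for suffixes starting at a boundary node. -/
def BS (I : LabelCover) (p : Pricing I) (P : List (Edge I.m I.k)) (n : ℕ) : Prop :=
  ∀ (x : Fin (I.m + 1)) (W : List (Edge I.m I.k)),
    W.length ≤ n →
    Walk I (.bd x) I.target W →
    (∃ Pre, P = Pre ++ W ∧ Walk I I.source (.bd x) Pre) →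
    ∃ (cnt : ℕ) (T : Finset (Fin I.m × (Fin I.k × Fin I.k))),
      I.GoodT W T ∧ (∀ z ∈ T, (x : ℕ) ≤ z.1) ∧ cnt ≤ 2 * T.card ∧
      I.revenue p W ≤ (((I.m - x) + 2 * cnt : ℕ) : ℝ≥0∞)

/-- Induction statement for suffixes starting with a pricable edge; `xu` is
the coordinate from which the consumer can deviate, `C₀` the cost accumulated
since passing `xu`, and `strong` selects the strengthened form available at
fresh entries. -/
def GS (I : LabelCover) (p : Pricing I) (P : List (Edge I.m I.k)) (n : ℕ) : Prop :=
  ∀ (σ : Fin I.m) (a : Fin I.k × Fin I.k) (W : List (Edge I.m I.k))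
    (xu : Fin (I.m + 1)) (C₀ : ℝ≥0∞) (strong : Bool),
    W.length + 1 ≤ n →
    (xu : ℕ) ≤ σ →
    Walk I (.tl σ a) I.target (Edge.price σ a :: W) →
    (∃ Pre, P = Pre ++ (Edge.price σ a :: W) ∧ Walk I I.source (.tl σ a) Pre) →
    (∀ (V1 V2 : List (Edge I.m I.k)) (w : Node I.m I.k) (M' : List (Edge I.m I.k)),
        Edge.price σ a :: W = V1 ++ V2 → Walk I (.tl σ a) w V1 →
        Walk I (.bd xu) w M' → C₀ + I.cost p V1 ≤ I.cost p M') →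
    (strong = true → (xu : ℕ) = (σ : ℕ) ∧ C₀ = 0) →
    ∃ (cnt : ℕ) (T : Finset (Fin I.m × (Fin I.k × Fin I.k))),
      I.GoodT (Edge.price σ a :: W) T ∧ (∀ z ∈ T, (σ : ℕ) ≤ z.1) ∧
      cnt ≤ 2 * T.card ∧ ((σ, a) ∈ T → cnt + 1 ≤ 2 * T.card) ∧
      I.revenue p (Edge.price σ a :: W) + C₀ ≤
        (((cond strong ((I.m - σ) + 2 * cnt)
           ((I.m - xu) + ((σ : ℕ) - xu) + 2 * cnt + 1)) : ℕ) : ℝ≥0∞)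

/-- The selection step: given a selection for the tail starting at the
furthest conflicting gadget `h`, extend it across the current gadget `σ`. -/
lemma select_step {P V : List (Edge I.m I.k)}
    (hWP : Walk I I.source I.target P)
    {σ h : Fin I.m} {a b_h : Fin I.k × Fin I.k}
    (hσh : (σ : ℕ) < h)
    (hVP : ∀ e ∈ V, e ∈ P)
    (hheadV : Edge.price σ a ∈ V)
    (hbP : Edge.price h b_h ∈ P)
    (hmax : ∀ (g : Fin I.m) (b : Fin I.k × Fin I.k), Edge.price g b ∈ V →
      I.Conflict σ g a b → (g : ℕ) ≤ h)
    {T₁ : Finset (Fin I.m × (Fin I.k × Fin I.k))} {cnt₁ : ℕ}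
    (hmem₁ : ∀ z ∈ T₁, Edge.price z.1 z.2 ∈ V)
    (hpair₁ : ∀ z ∈ T₁, ∀ w ∈ T₁, z ≠ w → ¬ I.Conflict z.1 w.1 z.2 w.2)
    (hge₁ : ∀ z ∈ T₁, (h : ℕ) ≤ z.1)
    (hcard₁ : cnt₁ ≤ 2 * T₁.card)
    (hflag₁ : (h, b_h) ∈ T₁ → cnt₁ + 1 ≤ 2 * T₁.card) :
    ∃ T : Finset (Fin I.m × (Fin I.k × Fin I.k)),
      (∀ z ∈ T, Edge.price z.1 z.2 ∈ V) ∧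
      (∀ z ∈ T, ∀ w ∈ T, z ≠ w → ¬ I.Conflict z.1 w.1 z.2 w.2) ∧
      (∀ z ∈ T, (σ : ℕ) ≤ z.1) ∧
      (cnt₁ + 1 ≤ 2 * T.card) ∧ ((σ, a) ∈ T → cnt₁ + 2 ≤ 2 * T.card) := by
  classical
  have huniq : ∀ z ∈ T₁, (z.1 : ℕ) = (h : ℕ) → z = (h, b_h) := by
    intro z hz hzh
    have h1 : z.1 = h := Fin.ext hzh
    have h2 : z.2 = b_h := by
      refine price_unique hWP (g := h) ?_ hbP
      rw [← h1]
      exact hVP _ (hmem₁ z hz)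
    cases z
    simp only at h1 h2
    rw [h1, h2]
  by_cases hmemh : (h, b_h) ∈ T₁
  · refine ⟨T₁, hmem₁, hpair₁, ?_, ?_, ?_⟩
    · intro z hz; exact le_trans (le_of_lt hσh) (hge₁ z hz)
    · exact hflag₁ hmemh
    · intro hσmem
      have h2 : (h : ℕ) ≤ (σ : ℕ) := hge₁ _ hσmem
      omega
  · have hσnot : (σ, a) ∉ T₁ := by
      intro hc
      have h2 : (h : ℕ) ≤ (σ : ℕ) := hge₁ _ hc
      omega
    have hnoconf : ∀ z ∈ T₁, ¬ I.Conflict σ z.1 a z.2 := by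
      intro z hz hc
      have hle := hmax z.1 z.2 (hmem₁ z hz) hc
      have heq : (z.1 : ℕ) = (h : ℕ) := le_antisymm hle (hge₁ z hz)
      exact hmemh (huniq z hz heq ▸ hz)
    refine ⟨insert (σ, a) T₁, ?_, ?_, ?_, ?_, ?_⟩
    · intro z hz
      rcases Finset.mem_insert.1 hz with rfl | hz'
      · exact hheadV
      · exact hmem₁ z hz'
    · intro z hz w hw hzw
      rcases Finset.mem_insert.1 hz with hz' | hz'
      · subst hz'
        rcases Finset.mem_insert.1 hw with hw' | hw'
        · exact absurd hw'.symm hzw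
        · exact hnoconf w hw'
      · rcases Finset.mem_insert.1 hw with hw' | hw'
        · subst hw'
          intro hc
          exact hnoconf z hz' (conflict_symm hc)
        · exact hpair₁ z hz' w hw' hzw
    · intro z hz
      rcases Finset.mem_insert.1 hz with rfl | hz'
      · exact le_refl _
      · exact le_trans (le_of_lt hσh) (hge₁ z hz')
    · rw [Finset.card_insert_of_notMem hσnot]
      omega
    · intro _
      rw [Finset.card_insert_of_notMem hσnot]
      omega

section Master

variable {P : List (Edge I.m I.k)}

lemma bs_zero : I.BS p P 0 := by
  intro x W hlen hw _
  have hWnil : W = [] := List.length_eq_zero_iff.mp (Nat.le_zero.mp hlen)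
  subst hWnil
  exact ⟨0, ∅, ⟨by simp, by simp⟩, by simp, by simp, by simp [revenue_nil]⟩

lemma bs_step (hWP : Walk I I.source I.target P)
    (hOpt : ∀ Q, Walk I I.source I.target Q → I.cost p P ≤ I.cost p Q)
    {n : ℕ} (ihB : I.BS p P n) (ihG : I.GS p P n) : I.BS p P (n + 1) := by
  intro x W hlen hw hPre
  cases W with
  | nil =>
    exact ⟨0, ∅, ⟨by simp, by simp⟩, by simp, by simp, by simp [revenue_nil]⟩
  | cons e W' =>
    obtain ⟨Pre, hPP, hPreW⟩ := hPre
    rcases walk_bd_cons hw with ⟨g, a, hgx, rfl, hgR, hw'⟩ | ⟨g, hgx, rfl, hw'⟩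
    · -- enter edge
      subst hgx
      cases W' with
      | nil => exact absurd rfl (walk_tl_target_ne_nil hw')
      | cons e2 W'' =>
        obtain ⟨rfl, hw''⟩ := walk_tl_cons hw'
        have hstep : Walk I (.bd g.castSucc) (.tl g a) [Edge.enter g a] :=
          Walk.cons (show I.EdgeOK (Edge.enter g a) from hgR) (Walk.nil _)
        have hPP' : P = (Pre ++ [Edge.enter g a]) ++ (Edge.price g a :: W'') := by
          rw [hPP]; simp
        have hPreW' : Walk I I.source (.tl g a) (Pre ++ [Edge.enter g a]) :=
          hPreW.append hstep
        have hctx : ∀ (V1 V2 : List (Edge I.m I.k)) (w : Node I.m I.k)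
            (M' : List (Edge I.m I.k)),
            Edge.price g a :: W'' = V1 ++ V2 → Walk I (.tl g a) w V1 →
            Walk I (.bd g.castSucc) w M' →
            (0 : ℝ≥0∞) + I.cost p V1 ≤ I.cost p M' := by
          intro V1 V2 w M' hsplit hV1 hM'
          rw [zero_add]
          have hsplit' : Walk I (.tl g a) I.target (V1 ++ V2) := by
            rw [← hsplit]; exact hw'
          obtain ⟨w', hV1', hV2⟩ := walk_split hsplit'
          have hww : w' = w := walk_end_unique hV1' hV1
          subst hww
          have hexch := exchange hOpt (A := Pre) (M := [Edge.enter g a] ++ V1)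
            (B := V2) (u := .bd g.castSucc) (v := w')
            (by rw [hPP, hsplit]; simp) hPreW (hstep.append hV1') hV2 hM'
          have hce : I.cost p ([Edge.enter g a] ++ V1) = I.cost p V1 := by
            rw [cost_append]
            have : I.cost p [Edge.enter g a] = 0 := by
              simp [cost, edgeCost_eq, fcNat, priceOf]
            rw [this, zero_add]
          rwa [hce] at hexch
        have hlen' : W''.length + 1 ≤ n := by
          simp only [List.length_cons] at hlen; omega
        obtain ⟨cnt, T, ⟨hTm, hTp⟩, hTge, hTcard, _, hrev⟩ :=
          ihG g a W'' g.castSucc 0 true hlen' (by simp) hw'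
            ⟨_, hPP', hPreW'⟩ hctx (fun _ => ⟨by simp, rfl⟩)
        refine ⟨cnt, T, ⟨?_, hTp⟩, ?_, hTcard, ?_⟩
        · intro z hz
          exact List.mem_cons_of_mem _ (hTm z hz)
        · intro z hz
          simpa using hTge z hz
        · have hre : I.revenue p (Edge.enter g a :: Edge.price g a :: W'') =
              I.revenue p (Edge.price g a :: W'') := by
            rw [revenue_cons]
            have : I.priceOf p (Edge.enter g a) = 0 := rfl
            rw [this, zero_add]
          rw [hre]
          have := hrev
          rw [Bool.cond_true] at this
          simpa using this
    · -- skip edge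
      subst hgx
      have hstep : Walk I (.bd g.castSucc) (.bd g.succ) [Edge.skip g] :=
        Walk.cons (show I.EdgeOK (Edge.skip g) from trivial) (Walk.nil _)
      have hlen' : W'.length ≤ n := by
        simp only [List.length_cons] at hlen; omega
      obtain ⟨cnt, T, ⟨hTm, hTp⟩, hTge, hTcard, hrev⟩ :=
        ihB g.succ W' hlen' hw'
          ⟨Pre ++ [Edge.skip g], by rw [hPP]; simp, hPreW.append hstep⟩
      refine ⟨cnt, T, ⟨?_, hTp⟩, ?_, hTcard, ?_⟩
      · intro z hz
        exact List.mem_cons_of_mem _ (hTm z hz)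
      · intro z hz
        have := hTge z hz
        simp only [Fin.val_succ] at this
        simp only [Fin.coe_castSucc]
        omega
      · have hre : I.revenue p (Edge.skip g :: W') = I.revenue p W' := by
          rw [revenue_cons]
          have : I.priceOf p (Edge.skip g) = 0 := rfl
          rw [this, zero_add]
        rw [hre]
        refine le_trans hrev (Nat.cast_le.mpr ?_)
        simp only [Fin.val_succ, Fin.coe_castSucc]
        omega

lemma gs_step {P : List (Edge I.m I.k)} (hWP : Walk I I.source I.target P)
    (hOpt : ∀ Q, Walk I I.source I.target Q → I.cost p P ≤ I.cost p Q)
    {n : ℕ} (ihB : I.BS p P n) (ihG : I.GS p P n) : I.GS p P (n + 1) := by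
  classical
  intro σ a W xu C₀ strong hlen hxu hwV hPre hctx hstrong
  obtain ⟨Pre, hPP, hPreW⟩ := hPre
  have hw' : Walk I (.hd σ a) I.target W := (walk_tl_cons hwV).2
  have hpvP : Edge.price σ a ∈ P := by rw [hPP]; simp
  have haR : a ∈ I.R σ := edgeOK_of_mem hWP hpvP
  have hprw : Walk I (.tl σ a) (.hd σ a) [Edge.price σ a] :=
    Walk.cons (show I.EdgeOK (Edge.price σ a) from haR) (Walk.nil _)
  have hVsubP : ∀ e ∈ Edge.price σ a :: W, e ∈ P := by
    intro e he; rw [hPP]; exact List.mem_append_right _ he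
  have hσm : (σ : ℕ) < I.m := σ.isLt
  have hxum : (xu : ℕ) ≤ (σ : ℕ) := hxu
  by_cases hS : ∃ (g : Fin I.m) (b : Fin I.k × Fin I.k),
      Edge.price g b ∈ W ∧ I.Conflict σ g a b
  · -- some later pricable edge on the path conflicts with (σ, a)
    obtain ⟨g0, b0, hg0W, hg0C⟩ := hS
    set S : Finset (Fin I.m) :=
      Finset.univ.filter
        (fun g : Fin I.m => ∃ b, Edge.price g b ∈ W ∧ I.Conflict σ g a b) with hSdef
    have hSne : S.Nonempty :=
      ⟨g0, Finset.mem_filter.2 ⟨Finset.mem_univ _, b0, hg0W, hg0C⟩⟩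
    set gmax := S.max' hSne with hgmaxdef
    have hgmaxS : gmax ∈ S := S.max'_mem hSne
    obtain ⟨bmax, hbW, hbC⟩ := (Finset.mem_filter.1 hgmaxS).2
    have hmaxS : ∀ (g : Fin I.m) (b : Fin I.k × Fin I.k), Edge.price g b ∈ W →
        I.Conflict σ g a b → (g : ℕ) ≤ gmax := by
      intro g b hgW hgC
      exact Fin.le_def.mp
        (S.le_max' g (Finset.mem_filter.2 ⟨Finset.mem_univ _, b, hgW, hgC⟩))
    have hmaxV : ∀ (g : Fin I.m) (b : Fin I.k × Fin I.k),
        Edge.price g b ∈ Edge.price σ a :: W → I.Conflict σ g a b → (g : ℕ) ≤ gmax := by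
      intro g b hgV hgC
      rcases List.mem_cons.1 hgV with heq | hgW
      · have h1 : g = σ := by injection heq
        have h2 : b = a := by injection heq
        subst h1; subst h2
        rcases hgC with ⟨_, hne⟩ | ⟨_, hne⟩ <;> exact absurd rfl hne
      · exact hmaxS g b hgW hgC
    have hσmax : (σ : ℕ) < gmax := price_gt_of_mem hw' hbW
    have hgm : (gmax : ℕ) < I.m := gmax.isLt
    have hbP : Edge.price gmax bmax ∈ P := hVsubP _ (List.mem_cons_of_mem _ hbW)
    have hbR : bmax ∈ I.R gmax := edgeOK_of_mem hWP hbP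
    obtain ⟨Y, Z, hWeq, hY0, hZ0⟩ := walk_mem_split hw' hbW
    have hY : Walk I (.hd σ a) (.tl gmax bmax) Y := hY0
    have hZ : Walk I (.hd gmax bmax) I.target Z := hZ0
    have hZ' : Walk I (.tl gmax bmax) I.target (Edge.price gmax bmax :: Z) :=
      Walk.cons (show I.EdgeOK (Edge.price gmax bmax) from hbR) hZ
    have hYne : Y ≠ [] := by
      intro h0; subst h0
      have := walk_nil_eq hY
      simp at this
    have hlenZ : Z.length + 1 ≤ n := by
      have hYlen : 1 ≤ Y.length := List.length_pos_iff.2 hYne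
      have hlen2 := hlen
      rw [hWeq] at hlen2
      simp only [List.length_cons, List.length_append] at hlen2
      omega
    have hOKsc : I.EdgeOK (Edge.shortcut σ gmax a bmax) := ⟨hσmax, haR, hbR, hbC⟩
    have hscw : Walk I (.hd σ a) (.tl gmax bmax) [Edge.shortcut σ gmax a bmax] :=
      Walk.cons hOKsc (Walk.nil _)
    by_cases hAc : Y = [Edge.shortcut σ gmax a bmax]
    · -- A-case: the path shortcuts directly to the furthest conflicting gadget
      set δ₀ : ℕ := (gmax : ℕ) - σ - 1 with hδ₀
      have hw2 : Walk I (.tl σ a) (.tl gmax bmax)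
          [Edge.price σ a, Edge.shortcut σ gmax a bmax] :=
        Walk.cons (show I.EdgeOK (Edge.price σ a) from haR) hscw
      have hPPh : P = (Pre ++ [Edge.price σ a, Edge.shortcut σ gmax a bmax]) ++
          (Edge.price gmax bmax :: Z) := by
        rw [hPP, hWeq, hAc]; simp
      have hcost2 : I.cost p [Edge.price σ a, Edge.shortcut σ gmax a bmax] =
          p σ a + ((δ₀ : ℕ) : ℝ≥0∞) := by
        simp [cost, edgeCost_eq, fcNat, priceOf, hδ₀]
      have hctxh : ∀ (V1 V2 : List (Edge I.m I.k)) (w : Node I.m I.k)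
          (M' : List (Edge I.m I.k)),
          Edge.price gmax bmax :: Z = V1 ++ V2 →
          Walk I (.tl gmax bmax) w V1 → Walk I (.bd xu) w M' →
          (C₀ + p σ a + ((δ₀ : ℕ) : ℝ≥0∞)) + I.cost p V1 ≤ I.cost p M' := by
        intro V1 V2 w M' hsp hV1 hM'
        have heq2 : Edge.price σ a :: W =
            ([Edge.price σ a, Edge.shortcut σ gmax a bmax] ++ V1) ++ V2 := by
          rw [hWeq, hAc, hsp]; simp
        have hx := hctx _ _ w M' heq2 (hw2.append hV1) hM'
        calc (C₀ + p σ a + ((δ₀ : ℕ) : ℝ≥0∞)) + I.cost p V1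
            = C₀ + I.cost p ([Edge.price σ a, Edge.shortcut σ gmax a bmax] ++ V1) := by
              rw [cost_append, hcost2]; ring
          _ ≤ I.cost p M' := hx
      obtain ⟨cnt₁, T₁, ⟨hTm₁, hTp₁⟩, hge₁, hcard₁, hflag₁, hrev₁⟩ :=
        ihG gmax bmax Z xu (C₀ + p σ a + ((δ₀ : ℕ) : ℝ≥0∞)) false hlenZ
          (le_trans hxum (le_of_lt hσmax)) hZ'
          ⟨_, hPPh, hPreW.append hw2⟩ hctxh (by simp)
      have hmemV₁ : ∀ z ∈ T₁, Edge.price z.1 z.2 ∈ Edge.price σ a :: W := by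
        intro z hz
        rw [hWeq]
        exact List.mem_cons_of_mem _ (List.mem_append_right _ (hTm₁ z hz))
      obtain ⟨T, hTmem, hTpair, hTge, hTcard, hTflag⟩ :=
        select_step hWP hσmax hVsubP (List.mem_cons_self) hbP hmaxV
          hmemV₁ hTp₁ hge₁ hcard₁ hflag₁
      have hrevV : I.revenue p (Edge.price σ a :: W) =
          p σ a + I.revenue p (Edge.price gmax bmax :: Z) := by
        rw [revenue_cons, priceOf_price, hWeq, hAc, revenue_append]
        have h0 : I.revenue p [Edge.shortcut σ gmax a bmax] = 0 := by
          simp [revenue, priceOf]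
        rw [h0, zero_add]
      rw [Bool.cond_false] at hrev₁
      have hkey : I.revenue p (Edge.price σ a :: W) + C₀ + ((δ₀ : ℕ) : ℝ≥0∞) =
          I.revenue p (Edge.price gmax bmax :: Z) + (C₀ + p σ a + ((δ₀ : ℕ) : ℝ≥0∞)) := by
        rw [hrevV]; ring
      have hNle : (I.m - xu) + ((gmax : ℕ) - xu) + 2 * cnt₁ + 1 ≤
          (cond strong ((I.m - σ) + 2 * (cnt₁ + 1))
            ((I.m - xu) + ((σ : ℕ) - xu) + 2 * (cnt₁ + 1) + 1)) + δ₀ := by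
        cases strong
        · rw [Bool.cond_false]; omega
        · obtain ⟨hxueq, -⟩ := hstrong rfl
          rw [Bool.cond_true]; omega
      refine ⟨cnt₁ + 1, T, ⟨hTmem, hTpair⟩, hTge, hTcard, hTflag, ?_⟩
      have hchain : I.revenue p (Edge.price σ a :: W) + C₀ + ((δ₀ : ℕ) : ℝ≥0∞) ≤
          (((cond strong ((I.m - σ) + 2 * (cnt₁ + 1))
            ((I.m - xu) + ((σ : ℕ) - xu) + 2 * (cnt₁ + 1) + 1)) : ℕ) : ℝ≥0∞) +
            ((δ₀ : ℕ) : ℝ≥0∞) := by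
        rw [hkey]
        refine le_trans hrev₁ ?_
        rw [← Nat.cast_add]
        exact Nat.cast_le.mpr hNle
      exact (ENNReal.add_le_add_iff_right (ENNReal.natCast_ne_top _)).mp hchain
    · -- B-case
      obtain ⟨e_out, Y₂, rfl⟩ : ∃ e f, Y = e :: f := by
        cases Y with
        | nil => exact absurd rfl hYne
        | cons e f => exact ⟨e, f, rfl⟩
      have hok_out : I.EdgeOK e_out := (walk_cons_inv hY).2.1
      have hY₂ : Walk I e_out.dst (.tl gmax bmax) Y₂ := (walk_cons_inv hY).2.2
      have hbranch : ∃ δ' : ℕ, fcNat e_out = δ' ∧ I.priceOf p e_out = 0 ∧ Y₂ ≠ [] ∧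
          C₀ + p σ a + ((δ' : ℕ) : ℝ≥0∞) ≤
            ((2 * ((σ : ℕ) + 1 + δ' - (xu : ℕ)) : ℕ) : ℝ≥0∞) := by
        rcases walk_hd_cons hY with ⟨heq, hw₂⟩ | ⟨g', b'', heq, hokS, hw₂⟩
        · subst heq
          refine ⟨0, rfl, rfl, ?_, ?_⟩
          · intro h0; rw [h0] at hw₂
            have := walk_nil_eq hw₂
            simp at this
          · obtain ⟨M', hM'w, hM'c⟩ := exists_skip_walk (I := I) (p := p) xu σ.succ
              (by simp only [Fin.val_succ]; omega)
            have hwalk2 : Walk I (.tl σ a) (.bd σ.succ)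
                [Edge.price σ a, Edge.exit σ a] :=
              Walk.cons (show I.EdgeOK (Edge.price σ a) from haR)
                (Walk.cons (show I.EdgeOK (Edge.exit σ a) from haR) (Walk.nil _))
            have hpb := hctx [Edge.price σ a, Edge.exit σ a]
              (Y₂ ++ (Edge.price gmax bmax :: Z)) (.bd σ.succ) M'
              (by rw [hWeq]; simp) hwalk2 hM'w
            have hcV1 : I.cost p [Edge.price σ a, Edge.exit σ a] = p σ a := by
              simp [cost, edgeCost_eq, fcNat, priceOf]
            rw [hcV1, hM'c] at hpb
            have harg : 2 * (((σ.succ : Fin (I.m + 1)) : ℕ) - (xu : ℕ)) =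
                2 * ((σ : ℕ) + 1 + 0 - (xu : ℕ)) := by
              simp [Fin.val_succ]
            rw [harg] at hpb
            simpa using hpb
        · subst heq
          have hσg' : (σ : ℕ) < g' := hokS.1
          refine ⟨(g' : ℕ) - σ - 1, rfl, rfl, ?_, ?_⟩
          · intro h0; rw [h0] at hw₂
            have h1 := walk_nil_eq hw₂
            have h2 : g' = gmax := by injection h1
            have h3 : b'' = bmax := by injection h1
            exact hAc (by rw [h0, h2, h3])
          · obtain ⟨Ms, hMsw, hMsc⟩ := exists_skip_walk (I := I) (p := p) xu g'.castSucc
              (by simp only [Fin.coe_castSucc]; omega)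
            have hent : Walk I (.bd g'.castSucc) (.tl g' b'') [Edge.enter g' b''] :=
              Walk.cons (show I.EdgeOK (Edge.enter g' b'') from hokS.2.2.1) (Walk.nil _)
            have hwalk2 : Walk I (.tl σ a) (.tl g' b'')
                [Edge.price σ a, Edge.shortcut σ g' a b''] :=
              Walk.cons (show I.EdgeOK (Edge.price σ a) from haR)
                (Walk.cons hokS (Walk.nil _))
            have hpb := hctx [Edge.price σ a, Edge.shortcut σ g' a b'']
              (Y₂ ++ (Edge.price gmax bmax :: Z)) (.tl g' b'') (Ms ++ [Edge.enter g' b''])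
              (by rw [hWeq]; simp) hwalk2 (hMsw.append hent)
            have hcV1 : I.cost p [Edge.price σ a, Edge.shortcut σ g' a b''] =
                p σ a + (((g' : ℕ) - σ - 1 : ℕ) : ℝ≥0∞) := by
              simp [cost, edgeCost_eq, fcNat, priceOf]
            have hcM' : I.cost p (Ms ++ [Edge.enter g' b'']) =
                ((2 * (((g'.castSucc : Fin (I.m + 1)) : ℕ) - (xu : ℕ)) : ℕ) : ℝ≥0∞) := by
              rw [cost_append, hMsc]
              have : I.cost p [Edge.enter g' b''] = 0 := by
                simp [cost, edgeCost_eq, fcNat, priceOf]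
              rw [this, add_zero]
            rw [hcV1, hcM'] at hpb
            have harg : 2 * (((g'.castSucc : Fin (I.m + 1)) : ℕ) - (xu : ℕ)) =
                2 * ((σ : ℕ) + 1 + ((g' : ℕ) - σ - 1) - (xu : ℕ)) := by
              simp only [Fin.coe_castSucc]; omega
            rw [harg] at hpb
            calc C₀ + p σ a + (((g' : ℕ) - σ - 1 : ℕ) : ℝ≥0∞)
                = C₀ + (p σ a + (((g' : ℕ) - σ - 1 : ℕ) : ℝ≥0∞)) := by ring
              _ ≤ _ := hpb
      obtain ⟨δ', hδ'eq, hpout, hY₂ne, hG1⟩ := hbranch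
      obtain ⟨Y₃, in_h, hY₂eq⟩ : ∃ L e, Y₂ = L ++ [e] := by
        rcases List.eq_nil_or_concat Y₂ with h0 | ⟨L, e, h0⟩
        · exact absurd h0 hY₂ne
        · exact ⟨L, e, by simpa [List.concat_eq_append] using h0⟩
      have hY₂' : Walk I e_out.dst (.tl gmax bmax) (Y₃ ++ [in_h]) := by
        rw [← hY₂eq]; exact hY₂
      obtain ⟨u₃, hY₃w, hinw⟩ := walk_split hY₂'
      obtain ⟨hu₃, hok_in, hin_dst_walk⟩ := walk_cons_inv hinw
      have hin_dst : in_h.dst = Node.tl gmax bmax := walk_nil_eq hin_dst_walk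
      have hinfo : ∃ (L_h : ℕ) (xuh : Fin (I.m + 1)), (xuh : ℕ) + L_h = (gmax : ℕ) ∧
          fcNat in_h = L_h ∧ I.priceOf p in_h = 0 ∧
          ∃ Eu, Walk I in_h.src (.bd xuh) Eu ∧ I.cost p Eu = 0 := by
        cases in_h with
        | enter i c =>
          have h1 : i = gmax := by injection hin_dst
          have h2 : c = bmax := by injection hin_dst
          subst h1; subst h2
          exact ⟨0, gmax.castSucc, by simp, rfl, rfl, [],
            Walk.nil _, by simp [cost]⟩
        | shortcut i j c d =>
          have h1 : j = gmax := by injection hin_dst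
          have h2 : d = bmax := by injection hin_dst
          subst h1; subst h2
          have hij : (i : ℕ) < gmax := hok_in.1
          refine ⟨(gmax : ℕ) - i - 1, i.succ, by simp only [Fin.val_succ]; omega,
            rfl, rfl, [Edge.exit i c], ?_, ?_⟩
          · exact Walk.cons (show I.EdgeOK (Edge.exit i c) from hok_in.2.1) (Walk.nil _)
          · simp [cost, edgeCost_eq, fcNat, priceOf]
        | price i c => simp [Edge.dst] at hin_dst
        | exit i c => simp [Edge.dst] at hin_dst
        | skip i => simp [Edge.dst] at hin_dst
      obtain ⟨L_h, xuh, hsum, hfc_in, hp_in, Eu, hEuW, hEuc⟩ := hinfo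
      have hPPh : P = (Pre ++ (Edge.price σ a :: e_out :: Y₂)) ++
          (Edge.price gmax bmax :: Z) := by
        rw [hPP, hWeq]; simp
      have hwalkY : Walk I (.tl σ a) (.tl gmax bmax) (Edge.price σ a :: e_out :: Y₂) :=
        Walk.cons (show I.EdgeOK (Edge.price σ a) from haR) hY
      have hctxh : ∀ (V1 V2 : List (Edge I.m I.k)) (w : Node I.m I.k)
          (M' : List (Edge I.m I.k)),
          Edge.price gmax bmax :: Z = V1 ++ V2 →
          Walk I (.tl gmax bmax) w V1 → Walk I (.bd xuh) w M' →
          ((L_h : ℕ) : ℝ≥0∞) + I.cost p V1 ≤ I.cost p M' := by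
        intro V1 V2 w M' hsp hV1 hM'
        have hZsp : Walk I (.tl gmax bmax) I.target (V1 ++ V2) := by
          rw [← hsp]; exact hZ'
        obtain ⟨w', hV1', hV2⟩ := walk_split hZsp
        have hww : w' = w := walk_end_unique hV1' hV1
        subst hww
        have hAwalk : Walk I I.source in_h.src (Pre ++ (Edge.price σ a :: e_out :: Y₃)) := by
          refine hPreW.append ?_
          have hsrc_out : (Node.hd σ a : Node I.m I.k) = e_out.src := (walk_cons_inv hY).1
          refine Walk.cons (show I.EdgeOK (Edge.price σ a) from haR) ?_
          show Walk I (Node.hd σ a) in_h.src (e_out :: Y₃)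
          rw [hsrc_out]
          exact Walk.cons hok_out (by rw [← hu₃]; exact hY₃w)
        have hMwalk : Walk I in_h.src w' (in_h :: V1) := by
          refine Walk.cons hok_in ?_
          rw [hin_dst]; exact hV1
        have hexch := exchange hOpt (A := Pre ++ (Edge.price σ a :: e_out :: Y₃))
          (M := in_h :: V1) (B := V2)
          (by rw [hPP, hWeq, hY₂eq, hsp]; simp) hAwalk hMwalk hV2 (hEuW.append hM')
        have hcM : I.cost p (in_h :: V1) = ((L_h : ℕ) : ℝ≥0∞) + I.cost p V1 := by
          rw [cost_cons, edgeCost_eq, hfc_in, hp_in, add_zero]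
        have hcM' : I.cost p (Eu ++ M') = I.cost p M' := by
          rw [cost_append, hEuc, zero_add]
        rw [hcM, hcM'] at hexch
        exact hexch
      obtain ⟨cnt₁, T₁, ⟨hTm₁, hTp₁⟩, hge₁, hcard₁, hflag₁, hrev₁⟩ :=
        ihG gmax bmax Z xuh ((L_h : ℕ) : ℝ≥0∞) false hlenZ (by omega) hZ'
          ⟨_, hPPh, hPreW.append hwalkY⟩ hctxh (by simp)
      have hG2 : I.cost p (e_out :: Y₂) ≤ (((gmax : ℕ) - σ - 1 : ℕ) : ℝ≥0∞) := by
        have hexch := exchange hOpt (A := Pre ++ [Edge.price σ a]) (M := e_out :: Y₂)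
          (B := Edge.price gmax bmax :: Z)
          (by rw [hPP, hWeq]; simp) (hPreW.append hprw) hY hZ' hscw
        have hcsc : I.cost p [Edge.shortcut σ gmax a bmax] =
            (((gmax : ℕ) - σ - 1 : ℕ) : ℝ≥0∞) := by
          simp [cost, edgeCost_eq, fcNat, priceOf]
        rwa [hcsc] at hexch
      have hinY₂ : in_h ∈ Y₂ := by rw [hY₂eq]; simp
      have hG2' : ((δ' : ℕ) : ℝ≥0∞) + ((L_h : ℕ) : ℝ≥0∞) + I.revenue p (e_out :: Y₂) ≤
          I.cost p (e_out :: Y₂) := by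
        rw [cost_eq_fixed_add_revenue]
        refine add_le_add ?_ le_rfl
        have h1 : I.fixedSum (e_out :: Y₂) = ((δ' : ℕ) : ℝ≥0∞) + I.fixedSum Y₂ := by
          have : I.fixedSum (e_out :: Y₂) = e_out.fixedCost + I.fixedSum Y₂ := by
            simp [fixedSum]
          rw [this, fixedCost_eq, hδ'eq]
        rw [h1]
        refine add_le_add le_rfl ?_
        rw [← hfc_in]
        exact fc_le_fixedSum hinY₂
      have hrevW : I.revenue p (Edge.price σ a :: W) =
          p σ a + (I.revenue p (e_out :: Y₂) + I.revenue p (Edge.price gmax bmax :: Z)) := by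
        rw [revenue_cons, priceOf_price, hWeq, revenue_append]
      rw [Bool.cond_false] at hrev₁
      have hsumEq : I.revenue p (Edge.price σ a :: W) + C₀ +
            ((2 * δ' + 2 * L_h : ℕ) : ℝ≥0∞) =
          (C₀ + p σ a + ((δ' : ℕ) : ℝ≥0∞)) +
            (((δ' : ℕ) : ℝ≥0∞) + ((L_h : ℕ) : ℝ≥0∞) + I.revenue p (e_out :: Y₂)) +
            (I.revenue p (Edge.price gmax bmax :: Z) + ((L_h : ℕ) : ℝ≥0∞)) := by
        rw [hrevW]; push_cast; ring
      have hbig : I.revenue p (Edge.price σ a :: W) + C₀ +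
            ((2 * δ' + 2 * L_h : ℕ) : ℝ≥0∞) ≤
          (((2 * ((σ : ℕ) + 1 + δ' - (xu : ℕ)) + ((gmax : ℕ) - σ - 1) +
            ((I.m - xuh) + ((gmax : ℕ) - xuh) + 2 * cnt₁ + 1) : ℕ)) : ℝ≥0∞) := by
        rw [hsumEq]
        refine le_trans (add_le_add (add_le_add hG1 (le_trans hG2' hG2)) hrev₁) ?_
        rw [← Nat.cast_add, ← Nat.cast_add]
      have hNineq : 2 * ((σ : ℕ) + 1 + δ' - (xu : ℕ)) + ((gmax : ℕ) - σ - 1) +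
            ((I.m - xuh) + ((gmax : ℕ) - xuh) + 2 * cnt₁ + 1) ≤
          (cond strong ((I.m - σ) + 2 * (cnt₁ + 1))
            ((I.m - xu) + ((σ : ℕ) - xu) + 2 * (cnt₁ + 1) + 1)) + (2 * δ' + 2 * L_h) := by
        cases strong
        · rw [Bool.cond_false]; omega
        · obtain ⟨hxueq, -⟩ := hstrong rfl
          rw [Bool.cond_true]; omega
      have hfinal : I.revenue p (Edge.price σ a :: W) + C₀ ≤
          (((cond strong ((I.m - σ) + 2 * (cnt₁ + 1))
            ((I.m - xu) + ((σ : ℕ) - xu) + 2 * (cnt₁ + 1) + 1)) : ℕ) : ℝ≥0∞) := by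
        have hch : I.revenue p (Edge.price σ a :: W) + C₀ +
              ((2 * δ' + 2 * L_h : ℕ) : ℝ≥0∞) ≤
            (((cond strong ((I.m - σ) + 2 * (cnt₁ + 1))
              ((I.m - xu) + ((σ : ℕ) - xu) + 2 * (cnt₁ + 1) + 1)) : ℕ) : ℝ≥0∞) +
              ((2 * δ' + 2 * L_h : ℕ) : ℝ≥0∞) := by
          refine le_trans hbig ?_
          rw [← Nat.cast_add]
          exact Nat.cast_le.mpr hNineq
        exact (ENNReal.add_le_add_iff_right (ENNReal.natCast_ne_top _)).mp hch
      have hmemV₁ : ∀ z ∈ T₁, Edge.price z.1 z.2 ∈ Edge.price σ a :: W := by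
        intro z hz
        rw [hWeq]
        exact List.mem_cons_of_mem _ (List.mem_append_right _ (hTm₁ z hz))
      obtain ⟨T, hTmem, hTpair, hTge, hTcard, hTflag⟩ :=
        select_step hWP hσmax hVsubP (List.mem_cons_self) hbP hmaxV
          hmemV₁ hTp₁ hge₁ hcard₁ hflag₁
      exact ⟨cnt₁ + 1, T, ⟨hTmem, hTpair⟩, hTge, hTcard, hTflag, hfinal⟩
  · -- E-case: no later conflict, the path must exit this gadget normally
    push_neg at hS
    obtain ⟨e, W₂, rfl⟩ : ∃ e W₂, W = e :: W₂ := by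
      cases W with
      | nil => exact absurd rfl (walk_hd_target_ne_nil hw')
      | cons e W₂ => exact ⟨e, W₂, rfl⟩
    rcases walk_hd_cons hw' with ⟨rfl, hw₂⟩ | ⟨h', b', rfl, hokS, hw₂⟩
    · -- exit edge
      have hlen₂ : W₂.length ≤ n := by
        simp only [List.length_cons] at hlen; omega
      have hwalk2 : Walk I (.tl σ a) (.bd σ.succ) [Edge.price σ a, Edge.exit σ a] :=
        Walk.cons (show I.EdgeOK (Edge.price σ a) from haR)
          (Walk.cons (show I.EdgeOK (Edge.exit σ a) from haR) (Walk.nil _))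
      obtain ⟨cnt', T', ⟨hTm, hTp⟩, hTge, hTcard, hrev'⟩ :=
        ihB σ.succ W₂ hlen₂ hw₂
          ⟨Pre ++ [Edge.price σ a, Edge.exit σ a], by rw [hPP]; simp,
            hPreW.append hwalk2⟩
      obtain ⟨M', hM'w, hM'c⟩ := exists_skip_walk (I := I) (p := p) xu σ.succ
        (by simp only [Fin.val_succ]; omega)
      have hpb := hctx [Edge.price σ a, Edge.exit σ a] W₂ (.bd σ.succ) M'
        (by simp) hwalk2 hM'w
      have hcV1 : I.cost p [Edge.price σ a, Edge.exit σ a] = p σ a := by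
        simp [cost, edgeCost_eq, fcNat, priceOf]
      rw [hcV1, hM'c] at hpb
      have hσnot : (σ, a) ∉ T' := by
        intro hc
        have := hTge _ hc
        simp only [Fin.val_succ] at this
        omega
      refine ⟨cnt' + 1, insert (σ, a) T', ⟨?_, ?_⟩, ?_, ?_, ?_, ?_⟩
      · intro z hz
        rcases Finset.mem_insert.1 hz with hz' | hz'
        · subst hz'; exact List.mem_cons_self
        · exact List.mem_cons_of_mem _ (List.mem_cons_of_mem _ (hTm z hz'))
      · intro z hz w hw hzw
        rcases Finset.mem_insert.1 hz with hz' | hz'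
        · subst hz'
          rcases Finset.mem_insert.1 hw with hw' | hw'
          · exact absurd hw'.symm hzw
          · exact hS w.1 w.2 (List.mem_cons_of_mem _ (hTm w hw'))
        · rcases Finset.mem_insert.1 hw with hw' | hw'
          · subst hw'
            intro hc
            exact hS z.1 z.2 (List.mem_cons_of_mem _ (hTm z hz')) (conflict_symm hc)
          · exact hTp z hz' w hw' hzw
      · intro z hz
        rcases Finset.mem_insert.1 hz with hz' | hz'
        · subst hz'; exact le_refl _
        · have := hTge z hz'
          simp only [Fin.val_succ] at this
          omega
      · rw [Finset.card_insert_of_notMem hσnot]; omega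
      · intro _
        rw [Finset.card_insert_of_notMem hσnot]; omega
      · have hrevV : I.revenue p (Edge.price σ a :: Edge.exit σ a :: W₂) =
            p σ a + I.revenue p W₂ := by
          rw [revenue_cons, revenue_cons, priceOf_price]
          have h0 : I.priceOf p (Edge.exit σ a) = 0 := rfl
          rw [h0, zero_add]
        have hNfin : 2 * (((σ.succ : Fin (I.m + 1)) : ℕ) - (xu : ℕ)) +
              ((I.m - (σ.succ : Fin (I.m + 1))) + 2 * cnt') ≤
            cond strong ((I.m - σ) + 2 * (cnt' + 1))
              ((I.m - xu) + ((σ : ℕ) - xu) + 2 * (cnt' + 1) + 1) := by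
          cases strong
          · rw [Bool.cond_false]; simp only [Fin.val_succ]; omega
          · obtain ⟨hxueq, -⟩ := hstrong rfl
            rw [Bool.cond_true]; simp only [Fin.val_succ]; omega
        calc I.revenue p (Edge.price σ a :: Edge.exit σ a :: W₂) + C₀
            = (C₀ + p σ a) + I.revenue p W₂ := by rw [hrevV]; ring
          _ ≤ ((2 * (((σ.succ : Fin (I.m + 1)) : ℕ) - (xu : ℕ)) : ℕ) : ℝ≥0∞) +
              (((I.m - (σ.succ : Fin (I.m + 1))) + 2 * cnt' : ℕ) : ℝ≥0∞) :=
            add_le_add hpb hrev'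
          _ = ((2 * (((σ.succ : Fin (I.m + 1)) : ℕ) - (xu : ℕ)) +
              ((I.m - (σ.succ : Fin (I.m + 1))) + 2 * cnt') : ℕ) : ℝ≥0∞) := by
            rw [← Nat.cast_add]
          _ ≤ _ := Nat.cast_le.mpr hNfin
    · -- shortcut edge: impossible, it would witness a conflict
      exfalso
      obtain ⟨e2, W₃, rfl⟩ : ∃ e2 W₃, W₂ = e2 :: W₃ := by
        cases W₂ with
        | nil => exact absurd rfl (walk_tl_target_ne_nil hw₂)
        | cons e2 W₃ => exact ⟨e2, W₃, rfl⟩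
      obtain ⟨rfl, -⟩ := walk_tl_cons hw₂
      exact hS h' b' (by simp) hokS.2.2.2

lemma master {P : List (Edge I.m I.k)} (hWP : Walk I I.source I.target P)
    (hOpt : ∀ Q, Walk I I.source I.target Q → I.cost p P ≤ I.cost p Q) :
    ∀ n, I.BS p P n ∧ I.GS p P n := by
  intro n
  induction n with
  | zero =>
    refine ⟨bs_zero, ?_⟩
    intro σ a W xu C₀ strong hlen
    exact absurd hlen (by omega)
  | succ n ih => exact ⟨bs_step hWP hOpt ih.1 ih.2, gs_step hWP hOpt ih.1 ih.2⟩

/-- The key bound: the revenue of the optimal path is at most `m + 2 cnt`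
where the label pairs of `2 |T| ≥ cnt` pricable edges of the path are pairwise
non-conflicting. -/
lemma revenue_bound {P : List (Edge I.m I.k)} (hWP : Walk I I.source I.target P)
    (hOpt : ∀ Q, Walk I I.source I.target Q → I.cost p P ≤ I.cost p Q) :
    ∃ (cnt : ℕ) (T : Finset (Fin I.m × (Fin I.k × Fin I.k))),
      I.GoodT P T ∧ cnt ≤ 2 * T.card ∧
      I.revenue p P ≤ ((I.m + 2 * cnt : ℕ) : ℝ≥0∞) := by
  obtain ⟨cnt, T, hGood, hge, hcard, hrev⟩ :=
    (master hWP hOpt P.length).1 0 P le_rfl hWP ⟨[], rfl, Walk.nil _⟩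
  refine ⟨cnt, T, hGood, hcard, le_trans hrev (Nat.cast_le.mpr ?_)⟩
  simp

end Master

end LabelCover


/-- If no label assignment satisfies more than `s` edges of the
label cover instance, then every pricing of the constructed StackSP instance
yields revenue at most `m + 4s`. -/
theorem stackSP_revenue_upper_bound (I : LabelCover) (s : ℕ)
    (hs : ∀ (ℓv : I.V → Fin I.k) (ℓw : I.W → Fin I.k), I.satCount ℓv ℓw ≤ s)
    (p : Pricing I) (P : List (Edge I.m I.k)) (hP : I.IsPurchased p P) :
    I.revenue p P ≤ (I.m : ℝ≥0∞) + 4 * (s : ℝ≥0∞) := by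
  classical
  obtain ⟨⟨hWP, hOpt⟩, -⟩ := hP
  obtain ⟨cnt, T, ⟨hTmem, hTpair⟩, hcard, hrev⟩ := revenue_bound hWP hOpt
  have hTs : T.card ≤ s := by
    rcases T.eq_empty_or_nonempty with rfl | ⟨z0, hz0⟩
    · simp
    · have hlv : ∃ ℓv : I.V → Fin I.k, ∀ z ∈ T, ℓv (I.ve z.1) = z.2.1 := by
        refine ⟨fun v => if hv : ∃ z, z ∈ T ∧ I.ve z.1 = v then hv.choose.2.1
          else z0.2.1, ?_⟩
        intro z hz
        have hv : ∃ w, w ∈ T ∧ I.ve w.1 = I.ve z.1 := ⟨z, hz, rfl⟩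
        beta_reduce
        rw [dif_pos hv]
        obtain ⟨hwT, hwve⟩ := hv.choose_spec
        by_cases hwz : hv.choose = z
        · rw [hwz]
        · by_contra hne
          exact hTpair _ hwT _ hz hwz (Or.inl ⟨hwve, hne⟩)
      have hlw : ∃ ℓw : I.W → Fin I.k, ∀ z ∈ T, ℓw (I.we z.1) = z.2.2 := by
        refine ⟨fun v => if hv : ∃ z, z ∈ T ∧ I.we z.1 = v then hv.choose.2.2
          else z0.2.2, ?_⟩
        intro z hz
        have hv : ∃ w, w ∈ T ∧ I.we w.1 = I.we z.1 := ⟨z, hz, rfl⟩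
        beta_reduce
        rw [dif_pos hv]
        obtain ⟨hwT, hwve⟩ := hv.choose_spec
        by_cases hwz : hv.choose = z
        · rw [hwz]
        · by_contra hne
          exact hTpair _ hwT _ hz hwz (Or.inr ⟨hwve, hne⟩)
      obtain ⟨ℓv, hℓv⟩ := hlv
      obtain ⟨ℓw, hℓw⟩ := hlw
      have hinj : Set.InjOn Prod.fst (T : Set (Fin I.m × (Fin I.k × Fin I.k))) := by
        intro z hz w hw h1
        have h2 : z.2 = w.2 := by
          refine price_unique hWP (hTmem z (Finset.mem_coe.1 hz)) ?_
          have := hTmem w (Finset.mem_coe.1 hw)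
          rwa [← h1] at this
        exact Prod.ext h1 h2
      have himg : T.image Prod.fst ⊆ Finset.univ.filter (I.Sat ℓv ℓw) := by
        intro g hg
        obtain ⟨z, hz, rfl⟩ := Finset.mem_image.1 hg
        refine Finset.mem_filter.2 ⟨Finset.mem_univ _, ?_⟩
        have hin : z.2 ∈ I.R z.1 := edgeOK_of_mem hWP (hTmem z hz)
        show (ℓv (I.ve z.1), ℓw (I.we z.1)) ∈ I.R z.1
        rw [hℓv z hz, hℓw z hz, Prod.mk.eta]
        exact hin
      calc T.card = (T.image Prod.fst).card := (Finset.card_image_of_injOn hinj).symm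
        _ ≤ (Finset.univ.filter (I.Sat ℓv ℓw)).card := Finset.card_le_card himg
        _ ≤ s := hs ℓv ℓw
  calc I.revenue p P ≤ ((I.m + 2 * cnt : ℕ) : ℝ≥0∞) := hrev
    _ ≤ ((I.m + 4 * s : ℕ) : ℝ≥0∞) := Nat.cast_le.mpr (by omega)
    _ = (I.m : ℝ≥0∞) + 4 * (s : ℝ≥0∞) := by push_cast; ring
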